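/- (Theorem 2, ℓ1-rate of convergence.) Let c > 1 and c̄ = (c+1)/(c−1), and suppose λ/n ≥ c‖Γ⁻¹S̃‖_∞ and κ_c̄ > 0. Then any square-root lasso minimizer β̂ satisfies ‖Γ(β̂ − β₀)‖₁ ≤ (1 + c̄)√s‖β̂ − β₀‖_{2,n}/κ_c̄. If moreover κ̃ > 0 and ρ̄ := λ√s/(nκ̃) < 1, then ‖Γ(β̂ − β₀)‖₁ ≤ (2(1 + c̄)√s/κ_c̄) · √Q̂(β₀) · (ϱ_c̄ + ρ̄)/(1 − ρ̄²). -/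

import Mathlib

open Finset MeasureTheory ProbabilityTheory

namespace SqrtLasso

/-- Empirical average `E_n[h_i] = n⁻¹ ∑ᵢ h i`. -/
noncomputable def En (n : ℕ) (h : Fin n → ℝ) : ℝ := (∑ i, h i) / n

/-- Euclidean inner product `a'b = ∑ⱼ aⱼ bⱼ`. -/
noncomputable def dot {p : ℕ} (a b : Fin p → ℝ) : ℝ := ∑ j, a j * b j

/-- Prediction norm `‖δ‖_{2,n} = (E_n[(x_i'δ)²])^{1/2}`. -/
noncomputable def predNorm (n : ℕ) {p : ℕ} (x : Fin n → Fin p → ℝ) (δ : Fin p → ℝ) : ℝ :=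
  Real.sqrt (En n fun i => (dot (x i) δ) ^ 2)

/-- `ℓ₁` norm of a vector. -/
noncomputable def l1 {p : ℕ} (v : Fin p → ℝ) : ℝ := ∑ j, |v j|

/-- Restriction `v_S`: equal to `v` on `S` and `0` outside. -/
def restr {p : ℕ} (S : Finset (Fin p)) (v : Fin p → ℝ) : Fin p → ℝ :=
  fun j => if j ∈ S then v j else 0

/-- `Γ v`, i.e. componentwise rescaling by loadings `γ`. -/
noncomputable def scl {p : ℕ} (γ v : Fin p → ℝ) : Fin p → ℝ := fun j => γ j * v j

/-- The support of a vector. -/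
noncomputable def supp {p : ℕ} (β : Fin p → ℝ) : Finset (Fin p) := Finset.univ.filter fun j => β j ≠ 0

/-- The least-squares criterion `Q̂(β) = E_n[(y_i - x_i'β)²]`. -/
noncomputable def Qhat (n : ℕ) {p : ℕ} (x : Fin n → Fin p → ℝ) (y : Fin n → ℝ)
    (β : Fin p → ℝ) : ℝ := En n fun i => (y i - dot (x i) β) ^ 2

/-- The restricted set `Δ_c̄`. -/
def Delta {p : ℕ} (γ : Fin p → ℝ) (T : Finset (Fin p)) (cb : ℝ) : Set (Fin p → ℝ) :=
  {δ | δ ≠ 0 ∧ l1 (scl γ (restr Tᶜ δ)) ≤ cb * l1 (scl γ (restr T δ))}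

/-- The restricted eigenvalue `κ_c̄`. -/
noncomputable def kappa (n : ℕ) {p : ℕ} (x : Fin n → Fin p → ℝ) (γ : Fin p → ℝ)
    (T : Finset (Fin p)) (cb : ℝ) : ℝ :=
  sInf {r | ∃ δ ∈ Delta γ T cb,
    r = Real.sqrt T.card * predNorm n x δ / l1 (scl γ (restr T δ))}

/-- The quantity `κ̃`. -/
noncomputable def kappaTilde (n : ℕ) {p : ℕ} (x : Fin n → Fin p → ℝ) (γ : Fin p → ℝ)
    (T : Finset (Fin p)) : ℝ :=
  sInf {r | ∃ δ : Fin p → ℝ, l1 (scl γ (restr Tᶜ δ)) < l1 (scl γ (restr T δ)) ∧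
    r = Real.sqrt T.card * predNorm n x δ /
      (l1 (scl γ (restr T δ)) - l1 (scl γ (restr Tᶜ δ)))}

/-- The score `S̃ = E_n[x_i(σε_i + r_i)] / √(E_n[(σε_i + r_i)²])`. -/
noncomputable def score (n : ℕ) {p : ℕ} (x : Fin n → Fin p → ℝ) (ε rr : Fin n → ℝ)
    (σ : ℝ) : Fin p → ℝ :=
  fun j => En n (fun i => x i j * (σ * ε i + rr i)) /
    Real.sqrt (En n fun i => (σ * ε i + rr i) ^ 2)

/-- `‖Γ⁻¹ S̃‖_∞ = max_j |S̃_j| / γ_j`. -/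
noncomputable def scoreSup (n : ℕ) {p : ℕ} (x : Fin n → Fin p → ℝ) (ε rr : Fin n → ℝ)
    (σ : ℝ) (γ : Fin p → ℝ) : ℝ :=
  ⨆ j, |score n x ε rr σ j| / γ j

/-- The quantity `ϱ_c̄`. -/
noncomputable def varrho (n : ℕ) {p : ℕ} (x : Fin n → Fin p → ℝ) (γ : Fin p → ℝ)
    (T : Finset (Fin p)) (β₀ : Fin p → ℝ) (S : Fin p → ℝ) (cb : ℝ) : ℝ :=
  sSup {r | ∃ δ ∈ Delta γ T cb, 0 < predNorm n x δ ∧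
    l1 (scl γ (δ + β₀)) ≤ cb * l1 (scl γ β₀) ∧ r = |dot S δ| / predNorm n x δ}

/-- Quadratic form `δ'Mδ`. -/
noncomputable def quadForm {p : ℕ} (M : Fin p → Fin p → ℝ) (δ : Fin p → ℝ) : ℝ :=
  ∑ j, ∑ k, δ j * M j k * δ k

/-- Maximal `m`-sparse eigenvalue `φ_max(m, M)`. -/
noncomputable def phiMax {p : ℕ} (M : Fin p → Fin p → ℝ) (T : Finset (Fin p)) (m : ℕ) : ℝ :=
  sSup {r | ∃ δ : Fin p → ℝ, δ ≠ 0 ∧ (supp δ \ T).card ≤ m ∧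
    r = quadForm M δ / ∑ j, (δ j) ^ 2}

/-- Minimal `m`-sparse eigenvalue `φ_min(m, M)`. -/
noncomputable def phiMin {p : ℕ} (M : Fin p → Fin p → ℝ) (T : Finset (Fin p)) (m : ℕ) : ℝ :=
  sInf {r | ∃ δ : Fin p → ℝ, δ ≠ 0 ∧ (supp δ \ T).card ≤ m ∧
    r = quadForm M δ / ∑ j, (δ j) ^ 2}

/-- Gram matrix `E_n[x_i x_i']`. -/
noncomputable def gram (n : ℕ) {p : ℕ} (x : Fin n → Fin p → ℝ) : Fin p → Fin p → ℝ :=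
  fun j k => En n fun i => x i j * x i k

/-- Rescaled Gram matrix `Γ⁻¹ E_n[x_i x_i'] Γ⁻¹`. -/
noncomputable def rgram (n : ℕ) {p : ℕ} (x : Fin n → Fin p → ℝ) (γ : Fin p → ℝ) :
    Fin p → Fin p → ℝ :=
  fun j k => gram n x j k / (γ j * γ k)

lemma l1_nonneg {p : ℕ} (v : Fin p → ℝ) : 0 ≤ l1 v :=
  Finset.sum_nonneg fun _ _ => abs_nonneg _

lemma l1_split {p : ℕ} (γ v : Fin p → ℝ) (T : Finset (Fin p)) :
    l1 (scl γ v) = l1 (scl γ (restr T v)) + l1 (scl γ (restr Tᶜ v)) := by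
  unfold l1 scl restr
  rw [← Finset.sum_add_distrib]
  refine Finset.sum_congr rfl fun j _ => ?_
  by_cases h : j ∈ T <;> simp [h]

lemma En_sq_nonneg (n : ℕ) (f : Fin n → ℝ) : 0 ≤ En n fun i => (f i) ^ 2 := by
  unfold En
  exact div_nonneg (Finset.sum_nonneg fun _ _ => sq_nonneg _) (Nat.cast_nonneg n)

lemma predNorm_nonneg (n : ℕ) {p : ℕ} (x : Fin n → Fin p → ℝ) (δ : Fin p → ℝ) :
    0 ≤ predNorm n x δ := Real.sqrt_nonneg _

lemma predNorm_sq (n : ℕ) {p : ℕ} (x : Fin n → Fin p → ℝ) (δ : Fin p → ℝ) :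
    (predNorm n x δ) ^ 2 = En n fun i => (dot (x i) δ) ^ 2 :=
  Real.sq_sqrt (En_sq_nonneg n _)

lemma dot_sub {p : ℕ} (a u v : Fin p → ℝ) : dot a (u - v) = dot a u - dot a v := by
  unfold dot
  rw [← Finset.sum_sub_distrib]
  exact Finset.sum_congr rfl fun j _ => by simp [Pi.sub_apply]; ring

lemma dot_swap (n : ℕ) {p : ℕ} (x : Fin n → Fin p → ℝ) (w : Fin n → ℝ) (δ : Fin p → ℝ) :
    dot (fun j => En n fun i => x i j * w i) δ = En n fun i => dot (x i) δ * w i := by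
  simp only [dot, En, div_mul_eq_mul_div]
  rw [← Finset.sum_div]
  congr 1
  simp only [Finset.sum_mul]
  rw [Finset.sum_comm]
  exact Finset.sum_congr rfl fun i _ => Finset.sum_congr rfl fun j _ => by ring

lemma score_dot (n : ℕ) {p : ℕ} (x : Fin n → Fin p → ℝ) (ε rr : Fin n → ℝ) (σ : ℝ)
    (δ : Fin p → ℝ) :
    dot (score n x ε rr σ) δ = (En n fun i => dot (x i) δ * (σ * ε i + rr i)) /
      Real.sqrt (En n fun i => (σ * ε i + rr i) ^ 2) := by
  rw [← dot_swap]
  simp only [dot, score, div_mul_eq_mul_div]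
  rw [← Finset.sum_div]

lemma score_abs_le (n : ℕ) {p : ℕ} (hp : 1 ≤ p) (x : Fin n → Fin p → ℝ)
    (ε rr : Fin n → ℝ) (σ : ℝ) (γ : Fin p → ℝ) (hγ : ∀ j, 1 ≤ γ j) (v : Fin p → ℝ) :
    |dot (score n x ε rr σ) v| ≤ scoreSup n x ε rr σ γ * l1 (scl γ v) := by
  have hb : BddAbove (Set.range fun j => |score n x ε rr σ j| / γ j) :=
    Set.Finite.bddAbove (Set.finite_range _)
  calc |dot (score n x ε rr σ) v| ≤ ∑ j, |score n x ε rr σ j * v j| := by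
        unfold dot; exact Finset.abs_sum_le_sum_abs _ _
    _ ≤ ∑ j, scoreSup n x ε rr σ γ * |γ j * v j| := by
        refine Finset.sum_le_sum fun j _ => ?_
        have hγj : (0:ℝ) < γ j := lt_of_lt_of_le one_pos (hγ j)
        have h1 : |score n x ε rr σ j * v j| =
            (|score n x ε rr σ j| / γ j) * |γ j * v j| := by
          rw [abs_mul, abs_mul, abs_of_pos hγj]
          field_simp
        rw [h1]
        exact mul_le_mul_of_nonneg_right (le_ciSup hb j) (abs_nonneg _)
    _ = scoreSup n x ε rr σ γ * l1 (scl γ v) := by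
        rw [← Finset.mul_sum]; rfl

lemma scoreSup_nonneg (n : ℕ) {p : ℕ} (hp : 1 ≤ p) (x : Fin n → Fin p → ℝ)
    (ε rr : Fin n → ℝ) (σ : ℝ) (γ : Fin p → ℝ) (hγ : ∀ j, 1 ≤ γ j) :
    0 ≤ scoreSup n x ε rr σ γ := by
  have hb : BddAbove (Set.range fun j => |score n x ε rr σ j| / γ j) :=
    Set.Finite.bddAbove (Set.finite_range _)
  have j0 : Fin p := ⟨0, hp⟩
  refine le_trans ?_ (le_ciSup hb j0)
  have hγj : (0:ℝ) < γ j0 := lt_of_lt_of_le one_pos (hγ j0)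
  positivity


set_option maxHeartbeats 1000000 in
/-- Theorem 2, ℓ₁-rate of convergence. -/
theorem statement_6 (n p : ℕ) (hn : 1 ≤ n) (hp : 1 ≤ p)
    (x : Fin n → Fin p → ℝ) (β₀ γ : Fin p → ℝ) (hγ : ∀ j, 1 ≤ γ j)
    (hs : 1 ≤ (supp β₀).card)
    (σ : ℝ) (hσ : 0 ≤ σ) (ε rr : Fin n → ℝ) (y : Fin n → ℝ)
    (hy : ∀ i, y i = dot (x i) β₀ + σ * ε i + rr i)
    (hQ : 0 < En n fun i => (σ * ε i + rr i) ^ 2)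
    (lam : ℝ) (hlam : 0 < lam)
    (c : ℝ) (hc : 1 < c)
    (hdom : c * scoreSup n x ε rr σ γ ≤ lam / n)
    (βh : Fin p → ℝ)
    (hmin : ∀ β : Fin p → ℝ,
      Real.sqrt (Qhat n x y βh) + lam / n * l1 (scl γ βh) ≤
        Real.sqrt (Qhat n x y β) + lam / n * l1 (scl γ β))
    (hκ : 0 < kappa n x γ (supp β₀) ((c + 1) / (c - 1))) :
    l1 (scl γ (βh - β₀)) ≤
        (1 + (c + 1) / (c - 1)) * Real.sqrt (supp β₀).card * predNorm n x (βh - β₀) /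
          kappa n x γ (supp β₀) ((c + 1) / (c - 1)) ∧
      (∀ ρ : ℝ,
        ρ = lam * Real.sqrt (supp β₀).card / (n * kappaTilde n x γ (supp β₀)) → ρ < 1 →
        l1 (scl γ (βh - β₀)) ≤
          2 * (1 + (c + 1) / (c - 1)) * Real.sqrt (supp β₀).card /
              kappa n x γ (supp β₀) ((c + 1) / (c - 1)) *
            Real.sqrt (Qhat n x y β₀) *
            ((varrho n x γ (supp β₀) β₀ (score n x ε rr σ) ((c + 1) / (c - 1)) + ρ) /
              (1 - ρ ^ 2))) := by
  have hn0 : (0:ℝ) < n := by exact_mod_cast hn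
  have hc1 : (0:ℝ) < c - 1 := by linarith
  have hc0 : (0:ℝ) < c := by linarith
  set T := supp β₀ with hT
  set cb := (c + 1) / (c - 1) with hcb_def
  set κ := kappa n x γ T cb with hκ_def
  set δ : Fin p → ℝ := βh - β₀ with hδ
  set t := predNorm n x δ with ht_def
  set a := Real.sqrt (En n fun i => (σ * ε i + rr i) ^ 2) with ha_def
  set S := score n x ε rr σ with hS_def
  set ssup := scoreSup n x ε rr σ γ with hssup_def
  set LT := l1 (scl γ (restr T δ)) with hLT_def
  set LC := l1 (scl γ (restr Tᶜ δ)) with hLC_def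
  set L := l1 (scl γ δ) with hL_def
  set b := Real.sqrt (Qhat n x y βh) with hb_def
  set B := En n (fun i => dot (x i) δ * (σ * ε i + rr i)) with hB_def
  clear_value B b L LC LT ssup S a t δ κ cb T
  have hcb1 : 1 < cb := by rw [hcb_def, lt_div_iff₀ hc1]; linarith
  have hcb0 : (0:ℝ) < cb := by linarith
  have ha : 0 < a := by rw [ha_def]; exact Real.sqrt_pos.mpr hQ
  have haz : a ≠ 0 := ne_of_gt ha
  have hb0 : 0 ≤ b := by rw [hb_def]; exact Real.sqrt_nonneg _
  have ht0 : 0 ≤ t := by rw [ht_def]; exact predNorm_nonneg n x δ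
  have hsq : (0:ℝ) < Real.sqrt T.card := Real.sqrt_pos.mpr (by exact_mod_cast hs)
  have hLT0 : 0 ≤ LT := by rw [hLT_def]; exact l1_nonneg _
  have hLC0 : 0 ≤ LC := by rw [hLC_def]; exact l1_nonneg _
  have hL0 : 0 ≤ L := by rw [hL_def]; exact l1_nonneg _
  have hLsplit : L = LT + LC := by
    rw [hL_def, hLT_def, hLC_def]; exact l1_split γ δ T
  have hssup0 : 0 ≤ ssup := by
    rw [hssup_def]; exact scoreSup_nonneg n hp x ε rr σ γ hγ
  have hr : (0:ℝ) < lam / n := div_pos hlam hn0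
  -- √Qhat β₀ = a
  have hQβ₀ : Real.sqrt (Qhat n x y β₀) = a := by
    rw [ha_def]; congr 1
    unfold Qhat; congr 1; funext i; rw [hy i]; ring_nf
  -- decomposition
  have ha2 : a ^ 2 = En n fun i => (σ * ε i + rr i) ^ 2 := by
    rw [ha_def]; exact Real.sq_sqrt (le_of_lt hQ)
  have hb2 : b ^ 2 = Qhat n x y βh := by
    rw [hb_def]; exact Real.sq_sqrt (En_sq_nonneg n _)
  have ht2 : t ^ 2 = En n fun i => (dot (x i) δ) ^ 2 := by
    rw [ht_def]; exact predNorm_sq n x δ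
  have hptw : ∀ i, (y i - dot (x i) βh)^2 - (σ*ε i + rr i)^2
      + 2*(dot (x i) δ * (σ*ε i + rr i)) = (dot (x i) δ)^2 := by
    intro i
    have hxd : dot (x i) βh = dot (x i) β₀ + dot (x i) δ := by
      rw [hδ, dot_sub]; ring
    rw [hy i, hxd]; ring
  have hkey : t ^ 2 = b ^ 2 - a ^ 2 + 2 * B := by
    rw [hb2, ha2, ht2, hB_def]
    simp only [Qhat, En]
    rw [div_sub_div_same, ← mul_div_assoc, ← add_div]
    congr 1
    rw [← Finset.sum_sub_distrib, Finset.mul_sum, ← Finset.sum_add_distrib]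
    exact (Finset.sum_congr rfl fun i _ => hptw i).symm
  -- Cauchy-Schwarz
  have hCS : B ^ 2 ≤ a ^ 2 * t ^ 2 := by
    rw [ha2, ht2, hB_def]
    simp only [En, div_pow]
    rw [div_mul_div_comm]
    have h := Finset.sum_mul_sq_le_sq_mul_sq Finset.univ (fun i => dot (x i) δ)
      (fun i => σ*ε i + rr i)
    have h2 : (∑ i, dot (x i) δ * (σ*ε i + rr i))^2 ≤
        (∑ i, (σ*ε i + rr i)^2) * (∑ i, (dot (x i) δ)^2) := by
      rw [mul_comm]; simpa using h
    have hnn : ((n:ℝ)^2) = (n:ℝ)*(n:ℝ) := sq (n:ℝ)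
    rw [hnn]
    exact div_le_div_of_nonneg_right h2 (by positivity) |>.trans_eq rfl
  -- score dot identity
  have hSδ : dot S δ = B / a := by
    rw [hS_def, hB_def, ha_def, score_dot]
  -- convexity
  have hconv : a - dot S δ ≤ b := by
    rcases le_or_gt (a - dot S δ) 0 with h | h
    · linarith
    · have hBt : B^2/a^2 ≤ t^2 := by
        rw [div_le_iff₀ (pow_pos ha 2)]
        linarith [hCS]
      have hsqE : (a - dot S δ)^2 = a^2 - 2*B + B^2/a^2 := by
        rw [hSδ]; field_simp; ring
      have h2 : (a - dot S δ)^2 ≤ b^2 := by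
        rw [hsqE]; linarith [hkey, hBt]
      have h3 := Real.sqrt_le_sqrt h2
      rw [Real.sqrt_sq (le_of_lt h), Real.sqrt_sq hb0] at h3
      exact h3
  -- score bound
  have hsc : ∀ v : Fin p → ℝ, c * |dot S v| ≤ lam/n * l1 (scl γ v) := by
    intro v
    have h1 := score_abs_le n hp x ε rr σ γ hγ v
    rw [← hS_def, ← hssup_def] at h1
    calc c * |dot S v| ≤ c * (ssup * l1 (scl γ v)) :=
          mul_le_mul_of_nonneg_left h1 (le_of_lt hc0)
      _ = (c * ssup) * l1 (scl γ v) := by ring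
      _ ≤ lam/n * l1 (scl γ v) :=
          mul_le_mul_of_nonneg_right hdom (l1_nonneg _)
  -- optimality comparison
  have hcomp : l1 (scl γ β₀) - l1 (scl γ βh) ≤ LT - LC := by
    have hTzero : ∀ j, j ∉ T → β₀ j = 0 := by
      intro j hj
      by_contra hne
      exact hj (by rw [hT]; simp [supp, hne])
    have hβ₀Tc : l1 (scl γ (restr Tᶜ β₀)) = 0 := by
      unfold l1 scl restr
      apply Finset.sum_eq_zero
      intro j _
      by_cases hj : j ∈ Tᶜ
      · rw [if_pos hj, hTzero j (Finset.mem_compl.mp hj)]; simp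
      · rw [if_neg hj]; simp
    have hTcδ : restr Tᶜ βh = restr Tᶜ δ := by
      funext j
      unfold restr
      by_cases hj : j ∈ Tᶜ
      · rw [if_pos hj, if_pos hj, hδ]
        have := hTzero j (Finset.mem_compl.mp hj)
        simp [Pi.sub_apply, this]
      · rw [if_neg hj, if_neg hj]
    have hTpart : l1 (scl γ (restr T β₀)) - l1 (scl γ (restr T βh)) ≤ LT := by
      rw [hLT_def]
      have hpt : ∀ j ∈ Finset.univ, |γ j * restr T β₀ j| - |γ j * restr T βh j| ≤
          |γ j * restr T δ j| := by
        intro j _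
        by_cases hj : j ∈ T
        · simp only [restr, if_pos hj]
          calc |γ j * β₀ j| - |γ j * βh j| ≤ |γ j * β₀ j - γ j * βh j| :=
                abs_sub_abs_le_abs_sub _ _
            _ = |γ j * δ j| := by
                rw [abs_sub_comm]
                congr 1
                have hδj : δ j = βh j - β₀ j := by rw [hδ]; rfl
                rw [hδj]; ring
        · simp [restr, if_neg hj]
      have hsum := Finset.sum_le_sum hpt
      rw [Finset.sum_sub_distrib] at hsum
      exact hsum
    calc l1 (scl γ β₀) - l1 (scl γ βh)
        = l1 (scl γ (restr T β₀)) -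
            (l1 (scl γ (restr T βh)) + l1 (scl γ (restr Tᶜ δ))) := by
          rw [l1_split γ β₀ T, l1_split γ βh T, hβ₀Tc, hTcδ]; ring
      _ ≤ LT - LC := by rw [hLC_def]; linarith [hTpart]
  have hopt : b - a ≤ lam/n * (LT - LC) := by
    have h := hmin β₀
    rw [hQβ₀] at h
    have h2 := mul_le_mul_of_nonneg_left hcomp (le_of_lt hr)
    linarith
  -- cone condition
  have hcone : LC ≤ cb * LT := by
    have h2 : -(dot S δ) ≤ lam/n * (LT - LC) := by linarith [hconv, hopt]
    have h3 : c * (-(dot S δ)) ≤ c * (lam/n * (LT - LC)) :=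
      mul_le_mul_of_nonneg_left h2 (le_of_lt hc0)
    have h4 : -(lam/n * L) ≤ c * (-(dot S δ)) := by
      have h5 := hsc δ
      rw [← hL_def] at h5
      have h6 : c * dot S δ ≤ c * |dot S δ| :=
        mul_le_mul_of_nonneg_left (le_abs_self _) (le_of_lt hc0)
      linarith [h5, h6]
    have hbig : 0 ≤ lam/n * (L + c * (LT - LC)) := by
      have heq : lam/n * (L + c*(LT-LC)) = lam/n * L + c * (lam/n * (LT-LC)) := by ring
      rw [heq]; linarith [h3, h4]
    have h6 : (0:ℝ) ≤ L + c * (LT - LC) := by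
      by_contra hcon
      push_neg at hcon
      linarith [mul_pos hr (neg_pos.mpr hcon)]
    rw [hcb_def, div_mul_eq_mul_div, le_div_iff₀ hc1]
    rw [hLsplit] at h6
    linarith [h6]
  -- l1 triangle bound
  have hLtri : L ≤ l1 (scl γ βh) + l1 (scl γ β₀) := by
    rw [hL_def]
    unfold l1 scl
    rw [← Finset.sum_add_distrib]
    apply Finset.sum_le_sum
    intro j _
    have hδj : δ j = βh j - β₀ j := by rw [hδ]; rfl
    rw [hδj]
    calc |γ j * (βh j - β₀ j)| = |γ j * βh j - γ j * β₀ j| := by congr 1; ring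
      _ ≤ |γ j * βh j| + |γ j * β₀ j| := abs_sub _ _
  have hβh : l1 (scl γ βh) ≤ cb * l1 (scl γ β₀) := by
    have h := hmin β₀
    rw [hQβ₀] at h
    have h1 : lam/n * l1 (scl γ βh) ≤ lam/n * l1 (scl γ β₀) + dot S δ := by
      linarith [hconv]
    have h2 : c * (lam/n * l1 (scl γ βh)) ≤
        c * (lam/n * l1 (scl γ β₀) + dot S δ) :=
      mul_le_mul_of_nonneg_left h1 (le_of_lt hc0)
    have h3 : c * dot S δ ≤ lam/n * (l1 (scl γ βh) + l1 (scl γ β₀)) := by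
      have h4 := hsc δ
      rw [← hL_def] at h4
      have h5 : c * dot S δ ≤ c * |dot S δ| :=
        mul_le_mul_of_nonneg_left (le_abs_self _) (le_of_lt hc0)
      have h6 : lam/n * L ≤ lam/n * (l1 (scl γ βh) + l1 (scl γ β₀)) :=
        mul_le_mul_of_nonneg_left hLtri (le_of_lt hr)
      linarith
    have hbig : 0 ≤ lam/n * ((c+1) * l1 (scl γ β₀) - (c-1) * l1 (scl γ βh)) := by
      have heq : lam/n * ((c+1) * l1 (scl γ β₀) - (c-1) * l1 (scl γ βh)) =
          c * (lam/n * l1 (scl γ β₀) + dot S δ)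
          + lam/n * (l1 (scl γ βh) + l1 (scl γ β₀))
          - c * (lam/n * l1 (scl γ βh)) - (c * dot S δ) := by ring
      rw [heq]; linarith [h2, h3]
    have h7 : (0:ℝ) ≤ (c+1) * l1 (scl γ β₀) - (c-1) * l1 (scl γ βh) := by
      by_contra hcon
      push_neg at hcon
      linarith [mul_pos hr (neg_pos.mpr hcon)]
    rw [hcb_def, div_mul_eq_mul_div, le_div_iff₀ hc1]
    linarith [h7]
  -- PART 1
  have hBdd : BddBelow {r | ∃ δ' ∈ Delta γ T cb,
      r = Real.sqrt T.card * predNorm n x δ' / l1 (scl γ (restr T δ'))} := by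
    refine ⟨0, ?_⟩
    rintro r ⟨δ', _, rfl⟩
    exact div_nonneg (mul_nonneg (Real.sqrt_nonneg _) (predNorm_nonneg n x δ'))
      (l1_nonneg _)
  have hpart1 : L ≤ (1 + cb) * Real.sqrt T.card * t / κ := by
    have hRHS0 : (0:ℝ) ≤ (1 + cb) * Real.sqrt T.card * t / κ := by
      apply div_nonneg ?_ (le_of_lt hκ)
      exact mul_nonneg (mul_nonneg (by linarith) (Real.sqrt_nonneg _)) ht0
    rcases eq_or_ne δ 0 with h0 | h0
    · have hLz : L = 0 := by
        rw [hL_def, h0]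
        unfold l1 scl
        apply Finset.sum_eq_zero; intro j _; simp
      rw [hLz]; exact hRHS0
    · have hcone' : l1 (scl γ (restr Tᶜ δ)) ≤ cb * l1 (scl γ (restr T δ)) := by
        rw [← hLT_def, ← hLC_def]; exact hcone
      have hmem : Real.sqrt T.card * t / LT ∈ {r | ∃ δ' ∈ Delta γ T cb,
          r = Real.sqrt T.card * predNorm n x δ' / l1 (scl γ (restr T δ'))} :=
        ⟨δ, ⟨h0, hcone'⟩, by rw [ht_def, hLT_def]⟩
      have hκle : κ ≤ Real.sqrt T.card * t / LT := by
        rw [hκ_def]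
        exact csInf_le hBdd hmem
      rcases eq_or_lt_of_le hLT0 with hLTz | hLTpos
      · have hLCz : LC ≤ 0 := by
          have h' := hcone
          rw [← hLTz] at h'
          simpa using h'
        have hLz : L = 0 := by
          rw [hLsplit, ← hLTz]
          linarith [hLC0, hLCz]
        rw [hLz]; exact hRHS0
      · have hLTle : LT ≤ Real.sqrt T.card * t / κ := by
          rw [le_div_iff₀ hκ]
          have := (le_div_iff₀ hLTpos).mp hκle
          linarith [this]
        calc L ≤ (1 + cb) * LT := by rw [hLsplit]; linarith [hcone]
          _ ≤ (1 + cb) * (Real.sqrt T.card * t / κ) :=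
              mul_le_mul_of_nonneg_left hLTle (by linarith)
          _ = (1 + cb) * Real.sqrt T.card * t / κ := by ring
  refine ⟨hpart1, ?_⟩
  -- PART 2
  intro ρ hρ hρ1
  set κt := kappaTilde n x γ T with hκt_def
  set ϱ := varrho n x γ T β₀ S cb with hϱ_def
  clear_value κt ϱ
  -- κ ≤ κt
  have hκκt : κ ≤ κt := by
    rw [hκt_def]
    unfold kappaTilde
    apply le_csInf
    · -- nonempty
      obtain ⟨j₀, hj₀⟩ := Finset.card_pos.mp (lt_of_lt_of_le one_pos hs)
      refine ⟨_, fun j => if j = j₀ then (1:ℝ) else 0, ?_, rfl⟩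
      have hTc0 : l1 (scl γ (restr Tᶜ fun j => if j = j₀ then (1:ℝ) else 0)) = 0 := by
        unfold l1 scl restr
        apply Finset.sum_eq_zero
        intro j _
        by_cases hj : j ∈ Tᶜ
        · have hne : j ≠ j₀ := fun h => (Finset.mem_compl.mp hj) (h ▸ hj₀)
          simp [hj, hne]
        · simp [hj]
      rw [hTc0]
      unfold l1 scl restr
      have hterm : ∀ j ∈ Finset.univ, (0:ℝ) ≤
          |γ j * if j ∈ T then (if j = j₀ then (1:ℝ) else 0) else 0| :=
        fun j _ => abs_nonneg _
      calc (0:ℝ) < |γ j₀ * if j₀ ∈ T then (if j₀ = j₀ then (1:ℝ) else 0) else 0| := by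
            rw [if_pos hj₀, if_pos rfl, mul_one]
            exact abs_pos.mpr (ne_of_gt (lt_of_lt_of_le one_pos (hγ j₀)))
        _ ≤ ∑ j, |γ j * if j ∈ T then (if j = j₀ then (1:ℝ) else 0) else 0| :=
            Finset.single_le_sum hterm (Finset.mem_univ j₀)
    · rintro r ⟨δ', hlt, rfl⟩
      have hd1 : 0 < l1 (scl γ (restr T δ')) :=
        lt_of_le_of_lt (l1_nonneg _) hlt
      have hδ'0 : δ' ≠ 0 := by
        intro h
        rw [h] at hd1
        have hz : l1 (scl γ (restr T (0 : Fin p → ℝ))) = 0 := by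
          unfold l1 scl restr
          apply Finset.sum_eq_zero; intro j _
          by_cases hj : j ∈ T <;> simp [hj]
        rw [hz] at hd1
        exact lt_irrefl _ hd1
      have hmem' : Real.sqrt T.card * predNorm n x δ' / l1 (scl γ (restr T δ')) ∈
          {r | ∃ δ'' ∈ Delta γ T cb,
            r = Real.sqrt T.card * predNorm n x δ'' / l1 (scl γ (restr T δ''))} := by
        refine ⟨δ', ⟨hδ'0, ?_⟩, rfl⟩
        calc l1 (scl γ (restr Tᶜ δ')) ≤ l1 (scl γ (restr T δ')) := le_of_lt hlt
          _ ≤ cb * l1 (scl γ (restr T δ')) := by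
              have := mul_le_mul_of_nonneg_right (le_of_lt hcb1) (le_of_lt hd1)
              linarith [this]
      have h1 : κ ≤ Real.sqrt T.card * predNorm n x δ' / l1 (scl γ (restr T δ')) := by
        rw [hκ_def]; exact csInf_le hBdd hmem'
      refine le_trans h1 ?_
      gcongr
      · exact mul_nonneg (le_of_lt hsq) (predNorm_nonneg n x δ')
      · linarith [l1_nonneg (scl γ (restr Tᶜ δ'))]
  have hκtpos : 0 < κt := lt_of_lt_of_le hκ hκκt
  have hρ0 : 0 ≤ ρ := by
    rw [hρ]
    exact div_nonneg (mul_nonneg (le_of_lt hlam) (Real.sqrt_nonneg _))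
      (le_of_lt (mul_pos hn0 hκtpos))
  have h1ρ : (0:ℝ) < 1 - ρ^2 := by
    have hρρ : ρ * ρ < 1 * 1 := mul_lt_mul' (le_of_lt hρ1) hρ1 hρ0 one_pos
    rw [sq]; linarith [hρρ]
  have hϱ0 : 0 ≤ ϱ := by
    rw [hϱ_def]
    unfold varrho
    apply Real.sSup_nonneg
    rintro r ⟨δ', _, hpos, _, rfl⟩
    exact div_nonneg (abs_nonneg _) (le_of_lt hpos)
  rw [hQβ₀]
  rcases eq_or_lt_of_le ht0 with htz | htpos
  · -- t = 0
    have hLz : L ≤ 0 := by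
      have h := hpart1
      rw [← htz] at h
      simpa using h
    have hRHS : 0 ≤ 2 * (1 + cb) * Real.sqrt T.card / κ * a *
        ((ϱ + ρ) / (1 - ρ^2)) := by
      apply mul_nonneg
      apply mul_nonneg
      · apply div_nonneg ?_ (le_of_lt hκ)
        exact mul_nonneg (by linarith) (Real.sqrt_nonneg _)
      · exact le_of_lt ha
      · exact div_nonneg (by linarith [hϱ0, hρ0]) (le_of_lt h1ρ)
    linarith
  · -- t > 0
    have hδ0 : δ ≠ 0 := by
      intro h
      rw [ht_def, h] at htpos
      have hz : predNorm n x (0 : Fin p → ℝ) = 0 := by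
        unfold predNorm En dot
        simp
      rw [hz] at htpos
      exact lt_irrefl _ htpos
    have hcone' : l1 (scl γ (restr Tᶜ δ)) ≤ cb * l1 (scl γ (restr T δ)) := by
      rw [← hLT_def, ← hLC_def]; exact hcone
    -- varrho is bounded above
    have hub : ∀ r ∈ {r | ∃ δ' ∈ Delta γ T cb, 0 < predNorm n x δ' ∧
        l1 (scl γ (δ' + β₀)) ≤ cb * l1 (scl γ β₀) ∧ r = |dot S δ'| / predNorm n x δ'},
        r ≤ ssup * (1 + cb) * Real.sqrt T.card / κ := by
      rintro r ⟨δ', ⟨hδ'0, hδ'cone⟩, hδ't, _, rfl⟩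
      have hbound0 : (0:ℝ) ≤ ssup * (1 + cb) * Real.sqrt T.card / κ := by
        apply div_nonneg ?_ (le_of_lt hκ)
        exact mul_nonneg (mul_nonneg hssup0 (by linarith)) (Real.sqrt_nonneg _)
      have habs := score_abs_le n hp x ε rr σ γ hγ δ'
      rw [← hS_def, ← hssup_def] at habs
      have hsplit' := l1_split γ δ' T
      have hLT'0 := l1_nonneg (scl γ (restr T δ'))
      have hLC'0 := l1_nonneg (scl γ (restr Tᶜ δ'))
      rcases eq_or_lt_of_le hLT'0 with hz | hpos'
      · have hl1z : l1 (scl γ δ') ≤ 0 := by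
          rw [hsplit', ← hz]
          have hcz : l1 (scl γ (restr Tᶜ δ')) ≤ 0 := by
            have h' := hδ'cone
            rw [← hz] at h'
            simpa using h'
          linarith
        have hdz : |dot S δ'| ≤ 0 := by
          have h1 := le_trans habs (mul_le_mul_of_nonneg_left hl1z hssup0)
          simpa using h1
        have hnum : |dot S δ'| / predNorm n x δ' ≤ 0 :=
          div_nonpos_of_nonpos_of_nonneg hdz (predNorm_nonneg n x δ')
        exact le_trans hnum hbound0
      · have hκle : κ ≤ Real.sqrt T.card * predNorm n x δ' /
            l1 (scl γ (restr T δ')) := by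
          rw [hκ_def]
          exact csInf_le hBdd ⟨δ', ⟨hδ'0, hδ'cone⟩, rfl⟩
        have hLT'le : l1 (scl γ (restr T δ')) ≤
            Real.sqrt T.card * predNorm n x δ' / κ := by
          rw [le_div_iff₀ hκ]
          have := (le_div_iff₀ hpos').mp hκle
          linarith [this]
        have hl1le : l1 (scl γ δ') ≤
            (1 + cb) * (Real.sqrt T.card * predNorm n x δ' / κ) := by
          rw [hsplit']
          calc l1 (scl γ (restr T δ')) + l1 (scl γ (restr Tᶜ δ'))
              ≤ (1 + cb) * l1 (scl γ (restr T δ')) := by linarith [hδ'cone]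
            _ ≤ (1 + cb) * (Real.sqrt T.card * predNorm n x δ' / κ) :=
                mul_le_mul_of_nonneg_left hLT'le (by linarith)
        rw [div_le_iff₀ hδ't]
        calc |dot S δ'| ≤ ssup * l1 (scl γ δ') := habs
          _ ≤ ssup * ((1 + cb) * (Real.sqrt T.card * predNorm n x δ' / κ)) :=
              mul_le_mul_of_nonneg_left hl1le hssup0
          _ = ssup * (1 + cb) * Real.sqrt T.card / κ * predNorm n x δ' := by ring
    have hBddA : BddAbove {r | ∃ δ' ∈ Delta γ T cb, 0 < predNorm n x δ' ∧
        l1 (scl γ (δ' + β₀)) ≤ cb * l1 (scl γ β₀) ∧ r = |dot S δ'| / predNorm n x δ'} :=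
      ⟨ssup * (1 + cb) * Real.sqrt T.card / κ, hub⟩
    have hδβ : δ + β₀ = βh := by
      rw [hδ]; funext j; simp
    have hmemv : |dot S δ| / t ∈ {r | ∃ δ' ∈ Delta γ T cb, 0 < predNorm n x δ' ∧
        l1 (scl γ (δ' + β₀)) ≤ cb * l1 (scl γ β₀) ∧ r = |dot S δ'| / predNorm n x δ'} :=
      ⟨δ, ⟨hδ0, hcone'⟩, by rw [← ht_def]; exact htpos,
        by rw [hδβ]; exact hβh, by rw [ht_def]⟩
    have hvle : |dot S δ| / t ≤ ϱ := by
      rw [hϱ_def]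
      unfold varrho
      exact le_csSup hBddA hmemv
    have hSδt : dot S δ ≤ ϱ * t := by
      calc dot S δ ≤ |dot S δ| := le_abs_self _
        _ = (|dot S δ| / t) * t := by rw [div_mul_cancel₀ _ (ne_of_gt htpos)]
        _ ≤ ϱ * t := mul_le_mul_of_nonneg_right hvle ht0
    -- κ̃ bound
    have hκtD : LT - LC ≤ Real.sqrt T.card * t / κt := by
      rcases le_or_gt LT LC with hle | hltc
      · have h0 : (0:ℝ) ≤ Real.sqrt T.card * t / κt :=
          div_nonneg (mul_nonneg (Real.sqrt_nonneg _) ht0) (le_of_lt hκtpos)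
        linarith
      · have hBddt : BddBelow {r | ∃ δ' : Fin p → ℝ,
            l1 (scl γ (restr Tᶜ δ')) < l1 (scl γ (restr T δ')) ∧
            r = Real.sqrt T.card * predNorm n x δ' /
              (l1 (scl γ (restr T δ')) - l1 (scl γ (restr Tᶜ δ')))} := by
          refine ⟨0, ?_⟩
          rintro r ⟨δ', hlt', rfl⟩
          have h1 : (0:ℝ) ≤ l1 (scl γ (restr T δ')) - l1 (scl γ (restr Tᶜ δ')) := by
            linarith
          exact div_nonneg (mul_nonneg (Real.sqrt_nonneg _) (predNorm_nonneg n x δ')) h1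
        have hltc' : l1 (scl γ (restr Tᶜ δ)) < l1 (scl γ (restr T δ)) := by
          rw [← hLT_def, ← hLC_def]; exact hltc
        have hκtle : κt ≤ Real.sqrt T.card * t / (LT - LC) := by
          rw [hκt_def]
          refine csInf_le hBddt ⟨δ, hltc', ?_⟩
          rw [ht_def, hLT_def, hLC_def]
        have hsub : (0:ℝ) < LT - LC := by linarith
        rw [le_div_iff₀ hκtpos]
        have := (le_div_iff₀ hsub).mp hκtle
        linarith
    have hD : b - a ≤ ρ * t := by
      have h1 : lam/n * (LT - LC) ≤ lam/n * (Real.sqrt T.card * t / κt) :=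
        mul_le_mul_of_nonneg_left hκtD (le_of_lt hr)
      have h2 : lam/n * (Real.sqrt T.card * t / κt) = ρ * t := by
        rw [hρ]
        have hκt0 : κt ≠ 0 := ne_of_gt hκtpos
        have hn0' : (n:ℝ) ≠ 0 := ne_of_gt hn0
        field_simp
      linarith [hopt, h1, h2.le, h2.ge]
    have hρt0 : 0 ≤ ρ * t := mul_nonneg hρ0 ht0
    have hprod : b^2 - a^2 ≤ ρ*t*(ρ*t + 2*a) := by
      have hint := mul_nonneg (sub_nonneg.mpr hD)
        (show (0:ℝ) ≤ b + a + ρ*t by linarith)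
      linarith [hint]
    have hBa : B = a * dot S δ := by
      rw [hSδ, mul_div_cancel₀ _ haz]
    have hmain : t^2 ≤ ρ*t*(ρ*t + 2*a) + 2*a*(ϱ*t) := by
      have h2B : 2*B ≤ 2*a*(ϱ*t) := by
        rw [hBa]
        linarith [mul_le_mul_of_nonneg_left hSδt (le_of_lt ha)]
      linarith [hkey, hprod, h2B]
    have hlin : (1 - ρ^2) * t ≤ 2*a*(ϱ + ρ) := by
      have h7 : ((1 - ρ^2) * t) * t ≤ (2*a*(ϱ + ρ)) * t := by linarith [hmain]
      exact le_of_mul_le_mul_right h7 htpos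
    have htle : t ≤ 2*a*(ϱ + ρ) / (1 - ρ^2) := by
      rw [le_div_iff₀ h1ρ]
      linarith [hlin]
    calc L ≤ (1 + cb) * Real.sqrt T.card * t / κ := hpart1
      _ ≤ (1 + cb) * Real.sqrt T.card * (2*a*(ϱ + ρ) / (1 - ρ^2)) / κ := by
          apply div_le_div_of_nonneg_right ?_ (le_of_lt hκ)
          exact mul_le_mul_of_nonneg_left htle
            (mul_nonneg (by linarith) (Real.sqrt_nonneg _))
      _ = 2 * (1 + cb) * Real.sqrt T.card / κ * a * ((ϱ + ρ) / (1 - ρ^2)) := by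
          ring

end SqrtLasso
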